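/- arXiv:2304.06862 — 2 statements merged into one kernel-verified Lean document; each statement's English description precedes it below -/
import Mathlib

section
/- For any word S of length n, the length of a longest square subsequence of S equals twice the maximum over all cut positions k (1 ≤ k < n) of the length of a longest common subsequence of S[0..k) and S[k..n). -/
/-- The length of a longest square subsequence of S equals twice the maximum,
over all cut positions 1 ≤ k < n, of the length of a longest common
subsequence of S[0..k) and S[k..n). -/
theorem longest_square_subsequence_eq_cuts {α : Type*} (S : List α) :
    sSup {m : ℕ | ∃ X : List α, (X ++ X).Sublist S ∧ m = (X ++ X).length} =
      2 * sSup {m : ℕ | ∃ k : ℕ, 1 ≤ k ∧ k < S.length ∧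
        ∃ X : List α, X.Sublist (S.take k) ∧ X.Sublist (S.drop k) ∧
          m = X.length} := by
  set A := {m : ℕ | ∃ X : List α, (X ++ X).Sublist S ∧ m = (X ++ X).length} with hA
  set B := {m : ℕ | ∃ k : ℕ, 1 ≤ k ∧ k < S.length ∧
      ∃ X : List α, X.Sublist (S.take k) ∧ X.Sublist (S.drop k) ∧ m = X.length} with hB
  have hA0 : (0 : ℕ) ∈ A := ⟨[], by simp⟩
  have hAbdd : BddAbove A := ⟨S.length, by
    rintro m ⟨X, hs, rfl⟩; exact hs.length_le⟩
  have hBbdd : BddAbove B := ⟨S.length, by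
    rintro m ⟨k, hk1, hk2, X, h1, h2, rfl⟩
    exact le_trans h2.length_le (by simp)⟩
  apply le_antisymm
  · obtain ⟨X, hs, hm⟩ := Nat.sSup_mem ⟨0, hA0⟩ hAbdd
    rcases eq_or_ne X [] with rfl | hX
    · simp at hm; omega
    · obtain ⟨r1, r2, hS, h1, h2⟩ := List.append_sublist_iff.mp hs
      have hr1 : r1 ≠ [] := fun h => hX (by simpa [h] using h1)
      have hr2 : r2 ≠ [] := fun h => hX (by simpa [h] using h2)
      have hk1 : 1 ≤ r1.length := List.length_pos_iff.mpr hr1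
      have hk2 : r1.length < S.length := by
        rw [hS, List.length_append]
        have := List.length_pos_iff.mpr hr2
        omega
      have hmem : X.length ∈ B := by
        refine ⟨r1.length, hk1, hk2, X, ?_, ?_, rfl⟩
        · rw [hS, List.take_left]; exact h1
        · rw [hS, List.drop_left]; exact h2
      have := le_csSup hBbdd hmem
      simp only [List.length_append] at hm
      omega
  · rcases Set.eq_empty_or_nonempty B with hBe | hBne
    · simp [hBe]
    · obtain ⟨k, hk1, hk2, X, h1, h2, hm⟩ := Nat.sSup_mem hBne hBbdd
      have hmem : 2 * X.length ∈ A := by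
        refine ⟨X, ?_, by simp; ring⟩
        have := (h1.append h2)
        rwa [List.take_append_drop] at this
      have := le_csSup hAbdd hmem
      omega
end

section
/- For any word S of length n, the length of a longest cubic subsequence of S equals three times the maximum over all pairs of cut positions 1 ≤ j < k < n of the length of a longest common subsequence of the three words S[0..j), S[j..k), and S[k..n). -/
lemma sSup_mul_three {s : Set ℕ} (hne : s.Nonempty) (hbdd : BddAbove s) :
    sSup ((fun ℓ => 3 * ℓ) '' s) = 3 * sSup s := by
  apply le_antisymm
  · apply csSup_le (hne.image _)
    rintro m ⟨a, ha, rfl⟩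
    exact Nat.mul_le_mul_left 3 (le_csSup hbdd ha)
  · obtain ⟨b, hb⟩ := hbdd
    refine le_csSup ⟨3 * b, ?_⟩ ⟨sSup s, Nat.sSup_mem hne ⟨b, hb⟩, rfl⟩
    rintro m ⟨a, ha, rfl⟩
    exact Nat.mul_le_mul_left 3 (hb ha)

/-- The length of a longest cubic subsequence of S equals three times the
maximum over pairs of cuts 1 ≤ j < k < n of the length of a longest common
subsequence of S[0..j), S[j..k) and S[k..n). -/
theorem longest_cubic_subsequence_eq_cuts {α : Type*} (S : List α) :
    sSup {m : ℕ | ∃ X : List α, (X ++ X ++ X).Sublist S ∧ m = (X ++ X ++ X).length} =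
      3 * sSup {m : ℕ | ∃ j k : ℕ, 1 ≤ j ∧ j < k ∧ k < S.length ∧
        ∃ X : List α, X.Sublist (S.take j) ∧
          X.Sublist ((S.drop j).take (k - j)) ∧ X.Sublist (S.drop k) ∧
          m = X.length} := by
  set L := {m : ℕ | ∃ X : List α, (X ++ X ++ X).Sublist S ∧ m = (X ++ X ++ X).length}
  set R := {m : ℕ | ∃ j k : ℕ, 1 ≤ j ∧ j < k ∧ k < S.length ∧
        ∃ X : List α, X.Sublist (S.take j) ∧
          X.Sublist ((S.drop j).take (k - j)) ∧ X.Sublist (S.drop k) ∧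
          m = X.length}
  have hRbdd : BddAbove R := by
    refine ⟨S.length, ?_⟩
    rintro m ⟨j, k, _, _, hk, X, _, _, h3, rfl⟩
    exact le_trans h3.length_le (by simpa using Nat.le_of_lt (lt_of_le_of_lt (Nat.sub_le _ _) (lt_of_le_of_lt (Nat.zero_le _) (by simpa using hk))))
  by_cases hn : 3 ≤ S.length
  · -- R is nonempty (contains 0)
    have hRne : R.Nonempty := by
      refine ⟨0, 1, 2, le_refl _, one_lt_two, by omega, [], ?_, ?_, ?_, rfl⟩ <;>
        exact List.nil_sublist _
    have hLR : L = (fun ℓ => 3 * ℓ) '' R := by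
      ext m
      constructor
      · rintro ⟨X, hsub, rfl⟩
        rcases eq_or_ne X [] with rfl | hX
        · exact ⟨0, by
            refine ⟨1, 2, le_refl _, one_lt_two, by omega, [], ?_, ?_, ?_, rfl⟩ <;>
              exact List.nil_sublist _, by simp⟩
        · rw [List.append_sublist_iff] at hsub
          obtain ⟨r₁, r₂, rfl, hsub1, h3⟩ := hsub
          rw [List.append_sublist_iff] at hsub1
          obtain ⟨A, B, rfl, h1, h2⟩ := hsub1
          have hXlen : 1 ≤ X.length := by
            cases X with | nil => exact absurd rfl hX | cons a t => simp
          have hA : 1 ≤ A.length := le_trans hXlen h1.length_le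
          have hB : 1 ≤ B.length := le_trans hXlen h2.length_le
          have hC : 1 ≤ r₂.length := le_trans hXlen h3.length_le
          refine ⟨X.length, ⟨A.length, A.length + B.length, hA, by omega, by simp; omega,
            X, ?_, ?_, ?_, rfl⟩, by simp; ring⟩
          · rw [show (A ++ B ++ r₂) = A ++ (B ++ r₂) by simp, List.take_left]
            exact h1
          · rw [show (A ++ B ++ r₂) = A ++ (B ++ r₂) by simp, List.drop_left,
              Nat.add_sub_cancel_left, List.take_left]
            exact h2
          · rw [show (A ++ B ++ r₂) = (A ++ B) ++ r₂ by simp,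
              List.drop_left' (by simp)]
            exact h3
      · rintro ⟨ℓ, ⟨j, k, hj, hjk, hk, X, h1, h2, h3, rfl⟩, rfl⟩
        refine ⟨X, ?_, by simp; ring⟩
        have hS : S = S.take j ++ ((S.drop j).take (k - j) ++ (S.drop j).drop (k - j)) := by
          simp
        have hdd : (S.drop j).drop (k - j) = S.drop k := by
          rw [List.drop_drop]; congr 1; omega
        have : (X ++ X ++ X).Sublist
            (S.take j ++ ((S.drop j).take (k - j) ++ (S.drop j).drop (k - j))) := by
          rw [List.append_assoc]
          exact h1.append (h2.append (hdd ▸ h3))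
        rwa [← hS] at this
    rw [hLR, sSup_mul_three hRne hRbdd]
  · -- degenerate: S.length ≤ 2, both sides 0
    have hR : R = ∅ := by
      ext m
      simp only [Set.mem_empty_iff_false, iff_false]
      rintro ⟨j, k, hj, hjk, hk, _⟩
      omega
    have hL : L = {0} := by
      ext m
      constructor
      · rintro ⟨X, hsub, rfl⟩
        have := hsub.length_le
        simp only [List.length_append] at this
        have : X.length = 0 := by omega
        simp [List.length_eq_zero_iff.mp this]
      · rintro rfl
        exact ⟨[], List.nil_sublist _, rfl⟩
    rw [hR, hL, csSup_singleton]
    simp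
end
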